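/- Let r > 0. Then ∫_0^{√w} |(1 + z/w)^{r-1} − 1| e^{-z} dz ≤ max{1/√w, e^{r/√w} − 1} as a bound, and consequently this integral tends to 0 as w → ∞. -/

import Mathlib

open MeasureTheory Real Filter

lemma ptwise_bound (r : ℝ) (hr : 0 < r) (w : ℝ) (hw : 0 < w) {z : ℝ}
    (hz : z ∈ Set.Ioo (0 : ℝ) (Real.sqrt w)) :
    |(1 + z / w) ^ (r - 1) - 1| ≤ max (1 / Real.sqrt w) (Real.exp (r / Real.sqrt w) - 1) := by
  obtain ⟨hz0, hz1⟩ := hz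
  have hsw : 0 < Real.sqrt w := Real.sqrt_pos.2 hw
  set x := z / w with hxdef
  have hx0 : 0 < x := div_pos hz0 hw
  have hsq : Real.sqrt w * Real.sqrt w = w := Real.mul_self_sqrt hw.le
  have hx : x ≤ 1 / Real.sqrt w := by
    rw [hxdef, div_le_div_iff₀ hw hsw]
    nlinarith
  rcases le_or_gt 1 r with h1r | h1r
  · -- r ≥ 1
    have v1 : (1:ℝ) ≤ (1 + x) ^ (r - 1) := by
      calc (1:ℝ) = 1 ^ (r-1) := (Real.one_rpow _).symm
        _ ≤ (1 + x) ^ (r - 1) := Real.rpow_le_rpow zero_le_one (by linarith) (by linarith)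
    have v2 : (1 + x) ^ (r - 1) ≤ Real.exp (r / Real.sqrt w) := by
      calc (1 + x) ^ (r - 1) ≤ (Real.exp x) ^ (r - 1) :=
            Real.rpow_le_rpow (by linarith) (by linarith [Real.add_one_le_exp x]) (by linarith)
        _ = Real.exp (x * (r - 1)) := by
            rw [Real.rpow_def_of_pos (Real.exp_pos x), Real.log_exp]
        _ ≤ Real.exp (r / Real.sqrt w) := by
            apply Real.exp_le_exp.2
            have h1sw : (0:ℝ) < 1 / Real.sqrt w := by positivity
            calc x * (r - 1) ≤ (1 / Real.sqrt w) * (r - 1) := by nlinarith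
              _ ≤ (1 / Real.sqrt w) * r := by nlinarith
              _ = r / Real.sqrt w := by ring
    rw [abs_of_nonneg (by linarith)]
    exact le_max_of_le_right (by linarith)
  · -- r < 1
    have v1 : (1 + x) ^ (r - 1) ≤ 1 :=
      Real.rpow_le_one_of_one_le_of_nonpos (by linarith) (by linarith)
    have v2 : (1 + x)⁻¹ ≤ (1 + x) ^ (r - 1) := by
      rw [← Real.rpow_neg_one]
      exact Real.rpow_le_rpow_of_exponent_le (by linarith) (by linarith)
    have hpos : (0:ℝ) < (1 + x)⁻¹ := by positivity
    have hinv : (1 + x) * (1 + x)⁻¹ = 1 := mul_inv_cancel₀ (by positivity)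
    have v3 : 1 - (1 + x)⁻¹ ≤ x := by nlinarith
    rw [abs_of_nonpos (by linarith)]
    exact le_max_of_le_left (by linarith)

lemma bound_part (r : ℝ) (hr : 0 < r) (w : ℝ) (hw : 0 < w) :
    (∫ z in Set.Ioo (0 : ℝ) (Real.sqrt w), |(1 + z / w) ^ (r - 1) - 1| * Real.exp (-z)) ≤
      max (1 / Real.sqrt w) (Real.exp (r / Real.sqrt w) - 1) := by
  have hsw : 0 < Real.sqrt w := Real.sqrt_pos.2 hw
  set C := max (1 / Real.sqrt w) (Real.exp (r / Real.sqrt w) - 1) with hC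
  have hC0 : 0 ≤ C := le_max_of_le_left (by positivity)
  have hexp : IntegrableOn (fun z : ℝ => Real.exp (-z)) (Set.Ioi 0) := by
    have := exp_neg_integrableOn_Ioi (0:ℝ) (one_pos)
    simpa using this
  have hint : IntegrableOn (fun z : ℝ => C * Real.exp (-z)) (Set.Ioi 0) :=
    hexp.const_mul C
  have step1 : (∫ z in Set.Ioo (0 : ℝ) (Real.sqrt w),
      |(1 + z / w) ^ (r - 1) - 1| * Real.exp (-z)) ≤
      ∫ z in Set.Ioo (0 : ℝ) (Real.sqrt w), C * Real.exp (-z) := by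
    apply integral_mono_of_nonneg
    · exact ae_of_all _ fun z => by positivity
    · exact hint.mono_set Set.Ioo_subset_Ioi_self
    · filter_upwards [ae_restrict_mem measurableSet_Ioo] with z hz
      exact mul_le_mul_of_nonneg_right (ptwise_bound r hr w hw hz) (Real.exp_pos _).le
  have step2 : (∫ z in Set.Ioo (0 : ℝ) (Real.sqrt w), C * Real.exp (-z)) ≤
      ∫ z in Set.Ioi (0:ℝ), C * Real.exp (-z) := by
    apply setIntegral_mono_set hint
    · exact ae_of_all _ fun z => by positivity
    · exact HasSubset.Subset.eventuallyLE Set.Ioo_subset_Ioi_self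
  have step3 : (∫ z in Set.Ioi (0:ℝ), C * Real.exp (-z)) = C := by
    rw [integral_const_mul, integral_exp_neg_Ioi_zero, mul_one]
  linarith

theorem integral_abs_rpow_sub_one_small (r : ℝ) (hr : 0 < r) :
    (∀ w : ℝ, 0 < w →
      (∫ z in Set.Ioo (0 : ℝ) (Real.sqrt w), |(1 + z / w) ^ (r - 1) - 1| * Real.exp (-z)) ≤
        max (1 / Real.sqrt w) (Real.exp (r / Real.sqrt w) - 1)) ∧
    Tendsto (fun w : ℝ =>
        ∫ z in Set.Ioo (0 : ℝ) (Real.sqrt w), |(1 + z / w) ^ (r - 1) - 1| * Real.exp (-z))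
      atTop (nhds 0) := by
  refine ⟨fun w hw => bound_part r hr w hw, ?_⟩
  have hsqrt : Tendsto (fun w : ℝ => 1 / Real.sqrt w) atTop (nhds 0) := by
    have hs : Tendsto Real.sqrt atTop atTop :=
      (tendsto_rpow_atTop (by norm_num : (0:ℝ) < 1/2)).congr
        (fun x => (Real.sqrt_eq_rpow x).symm)
    simpa [one_div, Function.comp_def] using tendsto_inv_atTop_zero.comp hs
  have h2 : Tendsto (fun w : ℝ => Real.exp (r / Real.sqrt w) - 1) atTop (nhds 0) := by
    have hdiv : Tendsto (fun w : ℝ => r / Real.sqrt w) atTop (nhds 0) := by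
      simpa [div_eq_mul_inv] using (hsqrt.const_mul r).congr (fun w => by ring)
    have h := ((Real.continuous_exp.tendsto 0).comp hdiv).sub
      (tendsto_const_nhds (x := (1:ℝ)) (f := atTop))
    simpa [Function.comp] using h
  have hmax : Tendsto (fun w : ℝ => max (1 / Real.sqrt w) (Real.exp (r / Real.sqrt w) - 1))
      atTop (nhds 0) := by
    simpa using hsqrt.max h2
  apply squeeze_zero' ?_ ?_ hmax
  · exact Eventually.of_forall fun w => integral_nonneg fun z => by positivity
  · filter_upwards [eventually_gt_atTop 0] with w hw
    exact bound_part r hr w hw
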